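/- Let f : ℝ^n → ℝ ∪ {∞} be proper closed and strongly convex with modulus μ_f > 0, g : ℝ^m → ℝ ∪ {∞} proper closed convex, A : ℝ^n → ℝ^m linear, and assume A(dom f) ∩ dom g ≠ ∅. Define the dual function ψ(y) = f*(-Aᵀy) + g*(y), x(y) = argmin_x { f(x) + ⟨y, Ax⟩ }, z_γ(y) = prox_{γ^{-1}g}(γ^{-1}y + Ax(y)), and the AME ψ_γ(y) = -[ f(x(y)) + g(z_γ(y)) + ⟨y, Ax(y) - z_γ(y)⟩ + (γ/2)‖Ax(y) - z_γ(y)‖² ]. Then ψ_γ(y) = f*(-Aᵀy) + g*(T_γ(y)) + (γ/2)‖Ax(y) - z_γ(y)‖² + γ⟨Ax(y), z_γ(y) - Ax(y)⟩, where T_γ(y) = y + γ(Ax(y) - z_γ(y)). -/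

import Mathlib

open scoped InnerProductSpace RealInnerProductSpace
open Filter Topology

noncomputable section

abbrev E (n : ℕ) := EuclideanSpace ℝ (Fin n)

/-- Convexity for extended-real-valued functions. -/
def EConvexOn {n : ℕ} (f : E n → EReal) : Prop :=
  ∀ x y : E n, ∀ a b : ℝ, 0 ≤ a → 0 ≤ b → a + b = 1 →
    f (a • x + b • y) ≤ (a : EReal) * f x + (b : EReal) * f y

def ProperFun {n : ℕ} (f : E n → EReal) : Prop :=
  (∃ x, f x ≠ ⊤) ∧ ∀ x, f x ≠ ⊥

def ProperClosedConvex {n : ℕ} (f : E n → EReal) : Prop :=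
  ProperFun f ∧ LowerSemicontinuous f ∧ EConvexOn f

/-- `f` is strongly convex with modulus `μ`: `f - (μ/2)‖·‖²` is convex. -/
def StronglyConvexWithMod {n : ℕ} (μ : ℝ) (f : E n → EReal) : Prop :=
  EConvexOn (fun x => f x - ((μ / 2 * ‖x‖ ^ 2 : ℝ) : EReal))

/-- Fenchel conjugate. -/
def conjFn {n : ℕ} (f : E n → EReal) (y : E n) : EReal :=
  ⨆ x : E n, ((⟪x, y⟫_ℝ : ℝ) : EReal) - f x

/-- Convex subdifferential. -/
def Subdiff {n : ℕ} (f : E n → EReal) (x : E n) : Set (E n) :=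
  {v | ∀ z, f x + ((⟪v, z - x⟫_ℝ : ℝ) : EReal) ≤ f z}

/-- `p` is the proximal point of `x` for `h` with stepsize `γ`. -/
def IsProx {n : ℕ} (γ : ℝ) (h : E n → EReal) (x p : E n) : Prop :=
  ∀ z : E n, h p + ((1 / (2 * γ) * ‖p - x‖ ^ 2 : ℝ) : EReal) ≤
    h z + ((1 / (2 * γ) * ‖z - x‖ ^ 2 : ℝ) : EReal)

/-- Moreau envelope. -/
def moreauEnv {n : ℕ} (γ : ℝ) (h : E n → EReal) (x : E n) : EReal :=
  ⨅ z : E n, h z + ((1 / (2 * γ) * ‖z - x‖ ^ 2 : ℝ) : EReal)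

/-- Dual objective `ψ(y) = f*(-Aᵀy) + g*(y)`. -/
def dualObj {n m : ℕ} (f : E n → EReal) (g : E m → EReal) (A : E n →L[ℝ] E m)
    (y : E m) : EReal :=
  conjFn f (-(ContinuousLinearMap.adjoint A y)) + conjFn g y

/-- The alternating minimization envelope `ψ_γ(y) = -L_γ(x(y), z_γ(y), y)`. -/
def AME {n m : ℕ} (f : E n → EReal) (g : E m → EReal) (A : E n →L[ℝ] E m)
    (γ : ℝ) (xmin : E m → E n) (zmin : E m → E m) (y : E m) : EReal :=
  -(f (xmin y) + g (zmin y)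
    + ((⟪y, A (xmin y) - zmin y⟫_ℝ + γ / 2 * ‖A (xmin y) - zmin y‖ ^ 2 : ℝ) : EReal))


lemma le_of_forall_small (a b q : ℝ) (hq : 0 ≤ q)
    (h : ∀ t : ℝ, 0 < t → t ≤ 1 → a ≤ b + t * q) : a ≤ b := by
  rcases eq_or_lt_of_le hq with h0 | h0
  · have h1 := h 1 one_pos le_rfl
    rw [← h0] at h1
    linarith
  · by_contra hc
    push_neg at hc
    have hab : 0 < a - b := by linarith
    have ht0 : 0 < min 1 ((a - b) / (2 * q)) :=
      lt_min one_pos (div_pos hab (by linarith))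
    have h2 := h _ ht0 (min_le_left _ _)
    have h3 : min 1 ((a - b) / (2 * q)) * q ≤ (a - b) / 2 := by
      calc min 1 ((a - b) / (2 * q)) * q
          ≤ ((a - b) / (2 * q)) * q :=
            mul_le_mul_of_nonneg_right (min_le_right _ _) (le_of_lt h0)
        _ = (a - b) / 2 := by field_simp
    linarith

/-- The alternating minimization envelope equals the forward-backward envelope
of the dual problem. -/
theorem AME_eq_forwardBackwardEnvelope
    {n m : ℕ} (μ γ : ℝ) (hμ : 0 < μ) (hγ : 0 < γ)
    (f : E n → EReal) (g : E m → EReal) (A : E n →L[ℝ] E m)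
    (hf : ProperClosedConvex f) (hsc : StronglyConvexWithMod μ f)
    (hg : ProperClosedConvex g)
    (hfeas : ∃ x, f x ≠ ⊤ ∧ g (A x) ≠ ⊤)
    (xmin : E m → E n)
    (hx : ∀ y x, f (xmin y) + ((⟪y, A (xmin y)⟫_ℝ : ℝ) : EReal)
        ≤ f x + ((⟪y, A x⟫_ℝ : ℝ) : EReal))
    (zmin : E m → E m)
    (hz : ∀ y, IsProx γ⁻¹ g (γ⁻¹ • y + A (xmin y)) (zmin y)) :
    ∀ y : E m,
      AME f g A γ xmin zmin y =
        conjFn f (-(ContinuousLinearMap.adjoint A y))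
        + conjFn g (y + γ • (A (xmin y) - zmin y))
        + ((γ / 2 * ‖A (xmin y) - zmin y‖ ^ 2
            + γ * ⟪A (xmin y), zmin y - A (xmin y)⟫_ℝ : ℝ) : EReal) := by
  intro y
  set x : E n := xmin y with hxdef
  set z : E m := zmin y with hzdef
  obtain ⟨x0, hx0f, hx0g⟩ := hfeas
  obtain ⟨r0, hr0⟩ : ∃ r : ℝ, f x0 = r :=
    ⟨(f x0).toReal, (EReal.coe_toReal hx0f (hf.1.2 x0)).symm⟩
  obtain ⟨s0, hs0⟩ : ∃ s : ℝ, g (A x0) = s :=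
    ⟨(g (A x0)).toReal, (EReal.coe_toReal hx0g (hg.1.2 (A x0))).symm⟩
  -- f x is real
  have hfx_ne_top : f x ≠ ⊤ := by
    intro h
    have h2 := hx y x0
    rw [← hxdef, h, hr0, ← EReal.coe_add, EReal.top_add_coe] at h2
    exact (EReal.coe_ne_top _) (top_le_iff.mp h2)
  obtain ⟨fx, hfx⟩ : ∃ r : ℝ, f x = r :=
    ⟨(f x).toReal, (EReal.coe_toReal hfx_ne_top (hf.1.2 x)).symm⟩
  -- g z is real
  set w : E m := γ⁻¹ • y + A x with hwdef
  have hgz_ne_top : g z ≠ ⊤ := by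
    intro h
    have h2 := hz y (A x0)
    rw [← hxdef, ← hzdef, ← hwdef, h, hs0, ← EReal.coe_add, EReal.top_add_coe] at h2
    exact (EReal.coe_ne_top _) (top_le_iff.mp h2)
  obtain ⟨gz, hgz⟩ : ∃ s : ℝ, g z = s :=
    ⟨(g z).toReal, (EReal.coe_toReal hgz_ne_top (hg.1.2 z)).symm⟩
  set T : E m := y + γ • (A x - z) with hTdef
  have hc : (1 : ℝ) / (2 * γ⁻¹) = γ / 2 := by field_simp
  have hTw : T = γ • (w - z) := by
    rw [hTdef, hwdef]
    match_scalars <;> field_simp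
  -- key subgradient inequality : T ∈ ∂g(z)
  have hsub : ∀ v : E m, (gz : EReal) + ((⟪T, v - z⟫_ℝ : ℝ) : EReal) ≤ g v := by
    intro v
    rcases eq_or_ne (g v) ⊤ with hv | hv
    · rw [hv]; exact le_top
    obtain ⟨gv, hgv⟩ : ∃ s : ℝ, g v = s :=
      ⟨(g v).toReal, (EReal.coe_toReal hv (hg.1.2 v)).symm⟩
    rw [hgv, ← EReal.coe_add, EReal.coe_le_coe_iff]
    have hinner : ⟪T, v - z⟫_ℝ = γ * ⟪w - z, v - z⟫_ℝ := by
      rw [hTw, real_inner_smul_left]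
    rw [hinner]
    -- for each t ∈ (0,1], a real inequality
    have P : ∀ t : ℝ, 0 < t → t ≤ 1 →
        gz + γ * ⟪w - z, v - z⟫_ℝ ≤ gv + t * (γ / 2 * ‖v - z‖ ^ 2) := by
      intro t ht ht1
      have hchain := hz y (t • v + (1 - t) • z)
      rw [← hxdef, ← hzdef, ← hwdef, hgz] at hchain
      have hconv := hg.2.2 v z t (1 - t) (le_of_lt ht) (by linarith) (by ring)
      rw [hgv, hgz, ← EReal.coe_mul, ← EReal.coe_mul, ← EReal.coe_add] at hconv
      have hchain2 : (gz : EReal) + ((1 / (2 * γ⁻¹) * ‖z - w‖ ^ 2 : ℝ) : EReal) ≤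
          ((t * gv + (1 - t) * gz : ℝ) : EReal) +
            ((1 / (2 * γ⁻¹) * ‖t • v + (1 - t) • z - w‖ ^ 2 : ℝ) : EReal) :=
        le_trans hchain (add_le_add hconv le_rfl)
      rw [← EReal.coe_add, ← EReal.coe_add, EReal.coe_le_coe_iff] at hchain2
      have hvec : t • v + (1 - t) • z - w = (z - w) + t • (v - z) := by module
      have hns : ‖t • v + (1 - t) • z - w‖ ^ 2 =
          ‖z - w‖ ^ 2 + 2 * (t * ⟪z - w, v - z⟫_ℝ) + t ^ 2 * ‖v - z‖ ^ 2 := by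
        rw [hvec, norm_add_sq_real, real_inner_smul_right, norm_smul,
          Real.norm_eq_abs, abs_of_pos ht, mul_pow]
      rw [hns, hc] at hchain2
      have hwz : ⟪w - z, v - z⟫_ℝ = -⟪z - w, v - z⟫_ℝ := by
        rw [← neg_sub z w, inner_neg_left]
      rw [hwz]
      have key : t * (gz + γ * -⟪z - w, v - z⟫_ℝ) ≤
          t * (gv + t * (γ / 2 * ‖v - z‖ ^ 2)) := by nlinarith [hchain2]
      exact le_of_mul_le_mul_left key ht
    -- pass to the limit t → 0
    exact le_of_forall_small _ _ _ (by positivity) P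
  -- conjugate of g at T
  have hconjg : conjFn g T = ((⟪z, T⟫_ℝ - gz : ℝ) : EReal) := by
    apply le_antisymm
    · apply iSup_le
      intro v
      rcases eq_or_ne (g v) ⊤ with hv | hv
      · rw [hv]
        simp [EReal.sub_top]
      obtain ⟨gv, hgv⟩ : ∃ s : ℝ, g v = s :=
        ⟨(g v).toReal, (EReal.coe_toReal hv (hg.1.2 v)).symm⟩
      have h2 := hsub v
      rw [hgv, ← EReal.coe_add, EReal.coe_le_coe_iff] at h2
      rw [hgv, ← EReal.coe_sub, EReal.coe_le_coe_iff]
      have hexp : ⟪T, v - z⟫_ℝ = ⟪T, v⟫_ℝ - ⟪T, z⟫_ℝ := inner_sub_right T v z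
      have c1 : ⟪v, T⟫_ℝ = ⟪T, v⟫_ℝ := real_inner_comm T v
      have c2 : ⟪z, T⟫_ℝ = ⟪T, z⟫_ℝ := real_inner_comm T z
      linarith [hexp ▸ h2]
    · have := le_iSup (fun v : E m => ((⟪v, T⟫_ℝ : ℝ) : EReal) - g v) z
      rw [hgz, ← EReal.coe_sub] at this
      exact this
  -- conjugate of f at -Aᵀy
  have hconjf : conjFn f (-(ContinuousLinearMap.adjoint A y)) =
      ((-⟪y, A x⟫_ℝ - fx : ℝ) : EReal) := by
    have hip : ∀ u : E n, ⟪u, -(ContinuousLinearMap.adjoint A y)⟫_ℝ = -⟪y, A u⟫_ℝ := by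
      intro u
      rw [inner_neg_right, ContinuousLinearMap.adjoint_inner_right, real_inner_comm]
    apply le_antisymm
    · apply iSup_le
      intro u
      rcases eq_or_ne (f u) ⊤ with hu | hu
      · rw [hu]
        simp [EReal.sub_top]
      obtain ⟨fu, hfu⟩ : ∃ r : ℝ, f u = r :=
        ⟨(f u).toReal, (EReal.coe_toReal hu (hf.1.2 u)).symm⟩
      have h2 := hx y u
      rw [← hxdef, hfx, hfu, ← EReal.coe_add, ← EReal.coe_add, EReal.coe_le_coe_iff] at h2
      rw [hfu, hip u, ← EReal.coe_sub, EReal.coe_le_coe_iff]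
      linarith
    · have := le_iSup
        (fun u : E n => ((⟪u, -(ContinuousLinearMap.adjoint A y)⟫_ℝ : ℝ) : EReal) - f u) x
      rw [hfx, hip x, ← EReal.coe_sub] at this
      exact this
  -- assemble
  rw [AME, ← hxdef, ← hzdef, hfx, hgz, hconjf, hconjg]
  norm_cast
  have hzT : ⟪z, T⟫_ℝ = ⟪z, y⟫_ℝ + γ * (⟪z, A x⟫_ℝ - ⟪z, z⟫_ℝ) := by
    rw [hTdef, inner_add_right, real_inner_smul_right, inner_sub_right]
  have h1 : ⟪y, A x - z⟫_ℝ = ⟪y, A x⟫_ℝ - ⟪y, z⟫_ℝ := inner_sub_right y (A x) z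
  have h2 : ⟪A x, z - A x⟫_ℝ = ⟪A x, z⟫_ℝ - ⟪A x, A x⟫_ℝ := inner_sub_right (A x) z (A x)
  have h3 : ‖A x - z‖ ^ 2 = ⟪A x, A x⟫_ℝ - 2 * ⟪A x, z⟫_ℝ + ⟪z, z⟫_ℝ := by
    rw [← real_inner_self_eq_norm_sq, inner_sub_left, inner_sub_right, inner_sub_right,
      real_inner_comm z (A x)]
    ring
  have c1 : ⟪z, y⟫_ℝ = ⟪y, z⟫_ℝ := real_inner_comm y z
  have c2 : ⟪z, A x⟫_ℝ = ⟪A x, z⟫_ℝ := real_inner_comm (A x) z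
  rw [hzT, h1, h2, h3, c1, c2]
  ring
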